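/- Let G be a finite abelian p-group and H ≤ G a subgroup. Then the minimal number of generators of G is at most the minimal number of generators of H plus log_p of the index [G : H]. -/

import Mathlib

open Subgroup

lemma rank_le_rank_add_rank_quotient {G : Type*} [CommGroup G] [Finite G] (H : Subgroup G) :
    Group.rank G ≤ Group.rank H + Group.rank (G ⧸ H) := by
  classical
  obtain ⟨S, hS1, hS2⟩ := Group.rank_spec H
  obtain ⟨T, hT1, hT2⟩ := Group.rank_spec (G ⧸ H)
  choose f hf using fun q : G ⧸ H => QuotientGroup.mk_surjective q
  set U : Finset G := S.image H.subtype ∪ T.image f with hU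
  have hHle : H ≤ closure (U : Set G) := by
    have h1 : H = Subgroup.map H.subtype (closure (S : Set H)) := by
      rw [hS2, ← MonoidHom.range_eq_map, H.range_subtype]
    rw [h1, MonoidHom.map_closure]
    apply Subgroup.closure_mono
    intro x hx
    simp only [hU, Finset.coe_union, Finset.coe_image, Set.mem_union] at *
    exact Or.inl hx
  have htop : closure (U : Set G) = ⊤ := by
    rw [eq_top_iff]
    intro g _
    have hq : (g : G ⧸ H) ∈ Subgroup.map (QuotientGroup.mk' H) (closure (U : Set G)) := by
      have : closure (T : Set (G ⧸ H)) ≤ Subgroup.map (QuotientGroup.mk' H) (closure (U : Set G)) := by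
        rw [closure_le]
        intro t ht
        refine ⟨f t, subset_closure ?_, hf t⟩
        simp only [hU, Finset.coe_union, Finset.coe_image, Set.mem_union]
        exact Or.inr ⟨t, ht, rfl⟩
      rw [hT2] at this
      exact this trivial
    obtain ⟨x, hx, hxg⟩ := hq
    have hmem : x⁻¹ * g ∈ H := by
      rw [← QuotientGroup.eq]
      exact hxg
    have : g = x * (x⁻¹ * g) := by group
    rw [this]
    exact mul_mem hx (hHle hmem)
  calc Group.rank G ≤ U.card := Group.rank_le htop
    _ ≤ (S.image H.subtype).card + (T.image f).card := Finset.card_union_le _ _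
    _ ≤ S.card + T.card := add_le_add Finset.card_image_le Finset.card_image_le
    _ = _ := by rw [hS1, hT1]

lemma rank_le_of_card_eq_pow {p : ℕ} (hp : p.Prime) :
    ∀ (k : ℕ) (Q : Type*) [CommGroup Q] [Finite Q], Nat.card Q = p ^ k → Group.rank Q ≤ k := by
  intro k
  induction k with
  | zero =>
    intro Q _ _ hQ
    have : Subsingleton Q := by
      rw [pow_zero] at hQ
      exact Nat.card_eq_one_iff_unique.mp hQ |>.1
    have : Subgroup.closure ((∅ : Finset Q) : Set Q) = ⊤ := Subsingleton.elim _ _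
    simpa using Group.rank_le this
  | succ n ih =>
    intro Q _ _ hQ
    have : Fact p.Prime := ⟨hp⟩
    have hdvd : p ∣ Nat.card Q := by rw [hQ]; exact dvd_pow_self p n.succ_ne_zero
    obtain ⟨g, hg⟩ := exists_prime_orderOf_dvd_card' p hdvd
    set N := Subgroup.closure (({g} : Finset Q) : Set Q) with hN
    have hcardN : Nat.card N = p := by
      rw [← hg, ← Nat.card_zpowers]
      congr 1
      rw [Subgroup.zpowers_eq_closure, hN, Finset.coe_singleton]
    have hcardQ : Nat.card (Q ⧸ N) = p ^ n := by
      have h := Subgroup.card_eq_card_quotient_mul_card_subgroup N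
      rw [hQ, hcardN, pow_succ'] at h
      exact (Nat.eq_of_mul_eq_mul_right hp.pos (by linarith [h])).symm
    have h1 : Group.rank N ≤ 1 := by
      simpa using Subgroup.rank_closure_finset_le_card ({g} : Finset Q)
    have h2 : Group.rank (Q ⧸ N) ≤ n := ih (Q ⧸ N) hcardQ
    calc Group.rank Q ≤ Group.rank N + Group.rank (Q ⧸ N) := rank_le_rank_add_rank_quotient N
      _ ≤ 1 + n := add_le_add h1 h2
      _ = n + 1 := by ring

/-- For a finite abelian `p`-group `G` and a subgroup `H ≤ G`,
`rank G ≤ rank H + log_p [G : H]`, where `[G : H] = p ^ log_p [G : H]`. -/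
theorem stmt_0 (p : ℕ) (hp : p.Prime) (G : Type*) [CommGroup G] [Finite G]
    (hG : IsPGroup p G) (H : Subgroup G) (k : ℕ) (hk : H.index = p ^ k) :
    Group.rank G ≤ Group.rank H + k := by
  have hcard : Nat.card (G ⧸ H) = p ^ k := by
    rw [← hk, Subgroup.index]
  calc Group.rank G ≤ Group.rank H + Group.rank (G ⧸ H) := rank_le_rank_add_rank_quotient H
    _ ≤ Group.rank H + k := by
        exact Nat.add_le_add_left (rank_le_of_card_eq_pow hp k (G ⧸ H) hcard) _
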